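/- A Dyck path of semilength n has at most ⌊n/2⌋ hills of size 2 (2-hills), and this bound is attained. Consequently, an (n+1)-LNakayama algebra has at most ⌊n/2⌋ 2-regular simple modules and hence at most 2^{⌊n/2⌋} exact structures on the category of finitely generated projective modules, and these bounds are sharp. -/

import Mathlib

namespace Nak

/-- Condition for `c` to be the Kupisch series of a (connected) `n`-Nakayama algebra:
entries are positive, satisfy `c i ≤ c (i+1) + 1` cyclically, and at most one vertex is a
sink (i.e. at most one `c i = 1`; if one exists the algebra is an LNakayama algebra,
otherwise a CNakayama algebra). -/
def IsKupisch {n : ℕ} (c : ZMod n → ℕ) : Prop :=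
  (∀ i, 1 ≤ c i) ∧ (∀ i, c i ≤ c (i + 1) + 1) ∧ (∀ i j, c i = 1 → c j = 1 → i = j)

/-- Condition for `c` to be the Kupisch series of an `(n+1)`-LNakayama algebra
(linear quiver with sink at vertex `n`). -/
def IsLKupisch (n : ℕ) (c : ZMod (n + 1) → ℕ) : Prop :=
  (∀ i, 1 ≤ c i) ∧ (∀ i, c i ≤ c (i + 1) + 1) ∧ c (n : ZMod (n + 1)) = 1 ∧
    ∀ i, i ≠ (n : ZMod (n + 1)) → 2 ≤ c i

/-- The coKupisch series determined by the Kupisch series `c`: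
`d i = min {k | k ≥ c (i - k)}`, the dimension of the indecomposable injective at vertex `i`. -/
noncomputable def coK {n : ℕ} (c : ZMod n → ℕ) (i : ZMod n) : ℕ :=
  sInf {k : ℕ | 1 ≤ k ∧ c (i - (k : ZMod n)) ≤ k}

/-- `PdIs c i k m` : for the Nakayama algebra with Kupisch series `c`, the indecomposable
uniserial module with top at vertex `i` and dimension `k` (with `1 ≤ k ≤ c i`) has
projective dimension `m`.  It is projective iff `k = c i`, and otherwise its first syzygy
is the uniserial module with top `i + k` and dimension `c i - k`.  In particular
`PdIs c i 1 m` states that the simple module `S i` has projective dimension `m`. -/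
inductive PdIs {n : ℕ} (c : ZMod n → ℕ) : ZMod n → ℕ → ℕ → Prop
  | proj (i : ZMod n) (k : ℕ) (h : k = c i) : PdIs c i k 0
  | step (i : ZMod n) (k m : ℕ) (h : k < c i)
      (h' : PdIs c (i + (k : ZMod n)) (c i - k) m) : PdIs c i k (m + 1)

/-- `CoSyz c s k l s' k'` : the `l`-th cosyzygy (in a minimal injective coresolution) of
the indecomposable uniserial module with socle at vertex `s` and dimension `k` is the
uniserial module with socle `s'` and dimension `k'`.  The module is injective iff
`k = coK c s`, and otherwise its first cosyzygy has socle `s - k` and dimension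
`coK c s - k`. -/
inductive CoSyz {n : ℕ} (c : ZMod n → ℕ) : ZMod n → ℕ → ℕ → ZMod n → ℕ → Prop
  | zero (s : ZMod n) (k : ℕ) : CoSyz c s k 0 s k
  | step (s : ZMod n) (k l : ℕ) (s' : ZMod n) (k' : ℕ)
      (h : CoSyz c s k l s' k') (h' : k' < coK c s') :
      CoSyz c s k (l + 1) (s' - (k' : ZMod n)) (coK c s' - k')

/-- The dimension of `Ext^l(S i, A)`: for a minimal injective coresolution of
`A = ⊕_r e_r A`, this is the number of indecomposable projectives `e_r A` (which have
socle at vertex `r + c r - 1` and dimension `c r`) whose `l`-th cosyzygy has socle `S i`. -/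
noncomputable def extDim {n : ℕ} (c : ZMod n → ℕ) (i : ZMod n) (l : ℕ) : ℕ :=
  Nat.card {r : ZMod n // ∃ m, CoSyz c (r + (c r : ZMod n) - 1) (c r) l i m}

/-- The simple module `S i` is `k`-regular: it has projective dimension `k`,
`Ext^j(S i, A) = 0` for `j < k`, and `dim Ext^k(S i, A) = 1`. -/
def IsRegular {n : ℕ} (c : ZMod n → ℕ) (k : ℕ) (i : ZMod n) : Prop :=
  PdIs c i 1 k ∧ (∀ j < k, extDim c i j = 0) ∧ extDim c i k = 1

/-- `p` is a Dyck path of semilength `n`: a list of `2n` steps (`true` = horizontal,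
`false` = vertical) with `n` horizontal steps, never going below the diagonal. -/
def IsDyck (n : ℕ) (p : List Bool) : Prop :=
  p.length = 2 * n ∧ p.count true = n ∧
    ∀ i ≤ 2 * n, (p.take i).count false ≤ (p.take i).count true

/-- The path `p` touches the main diagonal after `i` steps. -/
def balancedAt (p : List Bool) (i : ℕ) : Prop :=
  (p.take i).count true = (p.take i).count false

/-- Number of peaks: horizontal steps immediately followed by a vertical step. -/
noncomputable def numPeaks (p : List Bool) : ℕ :=
  Nat.card {i : ℕ // p[i]? = some true ∧ p[i + 1]? = some false}

/-- Number of returns (vertical steps ending on the main diagonal) which are not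
1-hills (i.e. not immediately preceded by a horizontal step starting on the diagonal). -/
noncomputable def numReturnsNotOneHill (p : List Bool) : ℕ :=
  Nat.card {i : ℕ // p[i]? = some false ∧ balancedAt p (i + 1) ∧
    ¬(1 ≤ i ∧ p[i - 1]? = some true ∧ balancedAt p (i - 1))}

/-- Number of 1-rises: horizontal steps neither preceded nor followed by a horizontal step. -/
noncomputable def numOneRises (p : List Bool) : ℕ :=
  Nat.card {i : ℕ // p[i]? = some true ∧ (i = 0 ∨ p[i - 1]? = some false) ∧
    p[i + 1]? ≠ some true}

/-- Number of 2-hills: two consecutive horizontal steps starting on the main diagonal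
immediately followed by two consecutive vertical steps. -/
noncomputable def numTwoHills (p : List Bool) : ℕ :=
  Nat.card {i : ℕ // balancedAt p i ∧ p[i]? = some true ∧ p[i + 1]? = some true ∧
    p[i + 2]? = some false ∧ p[i + 3]? = some false}

/-- Number of valleys (a vertical step followed by a horizontal step) not on the main
diagonal. -/
noncomputable def numOffDiagValleys (p : List Bool) : ℕ :=
  Nat.card {i : ℕ // p[i]? = some false ∧ p[i + 1]? = some true ∧ ¬balancedAt p (i + 1)}

/-- The Dyck path has height at most 2, i.e. all entries of its area sequence are at
most 3: the path never rises more than 2 above the main diagonal. -/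
def HeightLE2 (p : List Bool) : Prop :=
  ∀ i ≤ p.length, (p.take i).count true ≤ (p.take i).count false + 2


section Generic
variable {n : ℕ} {c : ZMod (n + 1) → ℕ}

lemma cast_sub_cast {N : ℕ} (a b : ℕ) (h : b ≤ a) :
    ((a - b : ℕ) : ZMod N) = (a : ZMod N) - (b : ZMod N) := by
  rw [eq_sub_iff_add_eq, ← Nat.cast_add, Nat.sub_add_cancel h]

lemma step_le (hc : ∀ i, c i ≤ c (i + 1) + 1) (s : ℕ) :
    ∀ j : ZMod (n + 1), c j ≤ c (j + (s : ZMod (n + 1))) + s := by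
  induction s with
  | zero => simp
  | succ s ih =>
    intro j
    have h1 : c j ≤ c (j + 1) + 1 := hc j
    have h2 : c (j + 1) ≤ c ((j + 1) + (s : ZMod (n + 1))) + s := ih (j + 1)
    have h3 : (j + 1) + (s : ZMod (n + 1)) = j + ((s + 1 : ℕ) : ZMod (n + 1)) := by
      push_cast; ring
    rw [h3] at h2
    omega

lemma pd2_facts {i : ZMod (n + 1)} (h : PdIs c i 1 2) :
    2 ≤ c i ∧ c i ≤ c (i + 1) ∧ c (i + (c i : ZMod (n + 1))) + c i = c (i + 1) + 1 := by
  cases h with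
  | step _ _ m h1 h2 =>
    rw [Nat.cast_one] at h2
    cases h2 with
    | step _ _ m' h3 h4 =>
      cases h4 with
      | proj _ _ h5 =>
        rw [cast_sub_cast (c i) 1 (by omega), Nat.cast_one] at h5
        have he : (i + 1) + ((c i : ZMod (n + 1)) - 1) = i + (c i : ZMod (n + 1)) := by
          ring
        rw [he] at h5
        exact ⟨by omega, by omega, by omega⟩

lemma stair {i : ZMod (n + 1)} (hc : ∀ i, c i ≤ c (i + 1) + 1)
    (h : PdIs c i 1 2) {u : ℕ} (hu1 : 1 ≤ u) (hu2 : u ≤ c i) :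
    c (i + (u : ZMod (n + 1))) + u = c (i + 1) + 1 := by
  obtain ⟨ha2, hab, hiac⟩ := pd2_facts h
  have hlow : c (i + 1) ≤ c (i + (u : ZMod (n + 1))) + (u - 1) := by
    have h2 := step_le hc (u - 1) (i + 1)
    have he : (i + 1) + ((u - 1 : ℕ) : ZMod (n + 1)) = i + (u : ZMod (n + 1)) := by
      rw [cast_sub_cast u 1 hu1, Nat.cast_one]; ring
    rwa [he] at h2
  have hup : c (i + (u : ZMod (n + 1))) ≤ c (i + (c i : ZMod (n + 1))) + (c i - u) := by
    have h2 := step_le hc (c i - u) (i + (u : ZMod (n + 1)))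
    have he : (i + (u : ZMod (n + 1))) + ((c i - u : ℕ) : ZMod (n + 1))
        = i + (c i : ZMod (n + 1)) := by
      rw [cast_sub_cast (c i) u hu2]; ring
    rwa [he] at h2
  omega

lemma coK_nonempty (hk : c (n : ZMod (n + 1)) = 1) (s : ZMod (n + 1)) :
    {k : ℕ | 1 ≤ k ∧ c (s - (k : ZMod (n + 1))) ≤ k}.Nonempty := by
  refine ⟨(n + 1) + (s - (n : ZMod (n + 1))).val, ⟨by omega, ?_⟩⟩
  have h1 : (((n + 1) + (s - (n : ZMod (n + 1))).val : ℕ) : ZMod (n + 1))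
      = s - (n : ZMod (n + 1)) := by
    rw [Nat.cast_add, ZMod.natCast_self, zero_add, ZMod.natCast_rightInverse _]
  rw [h1]
  have h2 : s - (s - (n : ZMod (n + 1))) = (n : ZMod (n + 1)) := by ring
  rw [h2, hk]
  omega

lemma coK_spec (hk : c (n : ZMod (n + 1)) = 1) (s : ZMod (n + 1)) :
    1 ≤ coK c s ∧ c (s - (coK c s : ZMod (n + 1))) ≤ coK c s :=
  Nat.sInf_mem (coK_nonempty hk s)

lemma lt_coK (hk : c (n : ZMod (n + 1)) = 1) {s : ZMod (n + 1)} {k : ℕ}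
    (h : ∀ j, 1 ≤ j → j ≤ k → ¬ c (s - (j : ZMod (n + 1))) ≤ j) : k < coK c s := by
  by_contra hle
  push_neg at hle
  obtain ⟨h1, h2⟩ := coK_spec hk s
  exact h _ h1 hle h2

lemma coK_eq (hk : c (n : ZMod (n + 1)) = 1) {s : ZMod (n + 1)} {b : ℕ} (hb1 : 1 ≤ b)
    (hb2 : c (s - (b : ZMod (n + 1))) ≤ b)
    (hmin : ∀ j, 1 ≤ j → j < b → ¬ c (s - (j : ZMod (n + 1))) ≤ j) : coK c s = b := by
  have h1 : coK c s ≤ b := Nat.sInf_le ⟨hb1, hb2⟩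
  have h2 : b - 1 < coK c s := lt_coK hk fun j hj1 hj2 => hmin j hj1 (by omega)
  omega

end Generic

section Upper
variable {n : ℕ} {c : ZMod (n + 1) → ℕ}

lemma natcast_ne_natcast {a b : ℕ} (ha : a ≤ n) (hb : b ≤ n) (hab : a ≠ b) :
    (a : ZMod (n + 1)) ≠ (b : ZMod (n + 1)) := by
  intro h
  have := congrArg ZMod.val h
  rw [ZMod.val_cast_of_lt (by omega), ZMod.val_cast_of_lt (by omega)] at this
  exact hab this

lemma chain_t (hc : ∀ i, c i ≤ c (i + 1) + 1) (hk : c (n : ZMod (n + 1)) = 1)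
    {i : ZMod (n + 1)} (hpd : PdIs c i 1 2) {t : ℕ} (ht2 : 2 ≤ t) (ht : t ≤ c i) :
    ∃ m, CoSyz c ((i + (t : ZMod (n + 1))) + (c (i + (t : ZMod (n + 1))) : ZMod (n + 1)) - 1)
      (c (i + (t : ZMod (n + 1)))) 2 i m := by
  obtain ⟨ha2, hab, hiac⟩ := pd2_facts hpd
  have hct : c (i + (t : ZMod (n + 1))) + t = c (i + 1) + 1 := stair hc hpd (by omega) ht
  set b := c (i + 1) with hb
  have htb : t ≤ b := le_trans ht hab
  -- start socle is i + b
  have hstart : (i + (t : ZMod (n + 1))) + (c (i + (t : ZMod (n + 1))) : ZMod (n + 1)) - 1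
      = i + (b : ZMod (n + 1)) := by
    have : ((t : ℕ) : ZMod (n + 1)) + ((c (i + (t : ZMod (n + 1))) : ℕ) : ZMod (n + 1))
        = (b : ZMod (n + 1)) + 1 := by
      rw [← Nat.cast_add, show t + c (i + (t : ZMod (n + 1))) = b + 1 from by omega]
      push_cast; ring
    linear_combination this
  -- coK at i + b equals b
  have hcoK : coK c (i + (b : ZMod (n + 1))) = b := by
    refine coK_eq hk (by omega) ?_ ?_
    · have : i + (b : ZMod (n + 1)) - (b : ZMod (n + 1)) = i := by ring
      rw [this]; omega
    · intro j hj1 hjb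
      have he : i + (b : ZMod (n + 1)) - (j : ZMod (n + 1))
          = i + ((b - j : ℕ) : ZMod (n + 1)) := by
        rw [cast_sub_cast b j (by omega)]; ring
      rw [he]
      set u := b - j with hu
      have hu1 : 1 ≤ u := by omega
      rcases le_or_gt u (c i) with hua | hua
      · have := stair hc hpd hu1 hua
        omega
      · have h2 := step_le hc (u - c i) (i + ((c i : ℕ) : ZMod (n + 1)))
        have he2 : (i + ((c i : ℕ) : ZMod (n + 1))) + ((u - c i : ℕ) : ZMod (n + 1))
            = i + ((u : ℕ) : ZMod (n + 1)) := by
          rw [cast_sub_cast u (c i) (by omega)]; ring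
        rw [he2] at h2
        omega
  -- coK at i + (t-1) is at least t
  have hcoK2 : t - 1 < coK c (i + ((t - 1 : ℕ) : ZMod (n + 1))) := by
    refine lt_coK hk ?_
    intro j hj1 hjt
    have he : i + ((t - 1 : ℕ) : ZMod (n + 1)) - (j : ZMod (n + 1))
        = i + ((t - 1 - j : ℕ) : ZMod (n + 1)) := by
      rw [cast_sub_cast (t - 1) j (by omega)]; ring
    rw [he]
    rcases Nat.eq_zero_or_pos (t - 1 - j) with h0 | h0
    · rw [h0]; simp only [Nat.cast_zero, add_zero]; omega
    · have := stair hc hpd h0 (by omega)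
      omega
  -- build the chain
  have s0 : CoSyz c (i + (b : ZMod (n + 1))) (c (i + (t : ZMod (n + 1)))) 0
      (i + (b : ZMod (n + 1))) (c (i + (t : ZMod (n + 1)))) := CoSyz.zero _ _
  have s1 := CoSyz.step _ _ _ _ _ s0 (by rw [hcoK]; omega)
  have he1 : i + (b : ZMod (n + 1)) - ((c (i + (t : ZMod (n + 1))) : ℕ) : ZMod (n + 1))
      = i + ((t - 1 : ℕ) : ZMod (n + 1)) := by
    have : ((t - 1 : ℕ) : ZMod (n + 1)) + ((c (i + (t : ZMod (n + 1))) : ℕ) : ZMod (n + 1))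
        = (b : ZMod (n + 1)) := by
      rw [← Nat.cast_add, show t - 1 + c (i + (t : ZMod (n + 1))) = b by omega]
    linear_combination -this
  have he1' : coK c (i + (b : ZMod (n + 1))) - c (i + (t : ZMod (n + 1))) = t - 1 := by
    rw [hcoK]; omega
  rw [he1, he1'] at s1
  have s2 := CoSyz.step _ _ _ _ _ s1 hcoK2
  have he2 : i + ((t - 1 : ℕ) : ZMod (n + 1)) - ((t - 1 : ℕ) : ZMod (n + 1)) = i := by ring
  rw [he2] at s2
  rw [hstart]
  exact ⟨_, s2⟩

lemma reg_two (hL : IsLKupisch n c) {i : ZMod (n + 1)} (hr : IsRegular c 2 i) :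
    c i = 2 ∧ c (i + ((2 : ℕ) : ZMod (n + 1))) + 1 = c (i + 1) ∧ i.val + 2 ≤ n := by
  obtain ⟨h1, hc, hk, h2x⟩ := hL
  obtain ⟨hpd, hj, he2⟩ := hr
  obtain ⟨ha2, hab, hiac⟩ := pd2_facts hpd
  have hin : i ≠ (n : ZMod (n + 1)) := by
    intro h; rw [h, hk] at ha2; omega
  have hn : 1 ≤ n := by
    by_contra h
    apply hin
    apply ZMod.val_injective
    have h1v := ZMod.val_lt i
    have h2v := ZMod.val_lt ((n : ℕ) : ZMod (n + 1))
    omega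
  -- c i = 2
  have hci : c i = 2 := by
    by_contra hne
    have ha3 : 3 ≤ c i := by omega
    have w2 := chain_t hc hk hpd (t := 2) le_rfl (by omega)
    have w3 := chain_t hc hk hpd (t := 3) (by omega) ha3
    have hne23 : i + ((2 : ℕ) : ZMod (n + 1)) ≠ i + ((3 : ℕ) : ZMod (n + 1)) := by
      intro h
      have h2 : ((2 : ℕ) : ZMod (n + 1)) = ((3 : ℕ) : ZMod (n + 1)) := add_left_cancel h
      have h3 : ((1 : ℕ) : ZMod (n + 1)) = 0 := by push_cast at h2 ⊢; linear_combination -h2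
      have h4 := Nat.le_of_dvd one_pos ((ZMod.natCast_eq_zero_iff 1 (n + 1)).mp h3)
      omega
    have : Nontrivial {r : ZMod (n + 1) //
        ∃ m, CoSyz c (r + (c r : ZMod (n + 1)) - 1) (c r) 2 i m} :=
      ⟨⟨i + ((2 : ℕ) : ZMod (n + 1)), w2⟩, ⟨i + ((3 : ℕ) : ZMod (n + 1)), w3⟩,
        by simpa [Subtype.mk.injEq] using hne23⟩
    have hlt : 1 < extDim c i 2 := Finite.one_lt_card
    omega
  constructor
  · exact hci
  have hst := stair hc hpd (u := 2) (by omega) (by omega)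
  constructor
  · omega
  -- position bounds
  have hi1n : i + 1 ≠ (n : ZMod (n + 1)) := by
    intro h
    have : c (i + 1) = 1 := by rw [h, hk]
    omega
  have hival : i.val < n := by
    have h2 := ZMod.val_lt i
    rcases Nat.lt_or_ge i.val n with h | h
    · exact h
    · exfalso
      apply hin
      have : i.val = n := by omega
      rw [← ZMod.natCast_rightInverse i, this]
  have hcv : ((i.val + 1 : ℕ) : ZMod (n + 1)) = i + 1 := by
    have := ZMod.natCast_rightInverse i
    rw [Nat.cast_add, Nat.cast_one, this]
  have hi1val : i.val + 1 ≠ n := by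
    intro h
    apply hi1n
    rw [← hcv, h]
  omega

lemma not_adjacent (hL : IsLKupisch n c) {i : ZMod (n + 1)} (hi : IsRegular c 2 i)
    (hi1 : IsRegular c 2 (i + 1)) : False := by
  have hci : c i = 2 := (reg_two hL hi).1
  have h0 : extDim c (i + 1) 0 = 0 := hi1.2.1 0 (by omega)
  have he : i + (c i : ZMod (n + 1)) - 1 = i + 1 := by
    rw [hci]; push_cast; ring
  have : Nonempty {r : ZMod (n + 1) //
      ∃ m, CoSyz c (r + (c r : ZMod (n + 1)) - 1) (c r) 0 (i + 1) m} :=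
    ⟨⟨i, ⟨c i, he ▸ CoSyz.zero (i + (c i : ZMod (n + 1)) - 1) (c i)⟩⟩⟩
  have hpos : 0 < extDim c (i + 1) 0 := Nat.card_pos
  omega

lemma count_le (hL : IsLKupisch n c) :
    Nat.card {i : ZMod (n + 1) // IsRegular c 2 i} ≤ n / 2 := by
  have key := Nat.card_le_card_of_injective
    (f := fun x : {i : ZMod (n + 1) // IsRegular c 2 i} =>
      (⟨x.1.val / 2, by have h := (reg_two hL x.2).2.2; omega⟩ : Fin (n / 2))) ?_
  · simpa using key
  · rintro ⟨x, hx⟩ ⟨y, hy⟩ hxy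
    simp only [Fin.mk.injEq] at hxy
    have hx2 := (reg_two hL hx).2.2
    have hy2 := (reg_two hL hy).2.2
    have hcase : x.val = y.val ∨ y.val = x.val + 1 ∨ x.val = y.val + 1 := by omega
    rcases hcase with h | h | h
    · exact Subtype.ext (ZMod.val_injective _ h)
    · exfalso
      have hcv : ((x.val + 1 : ℕ) : ZMod (n + 1)) = x + 1 := by
        rw [Nat.cast_add, Nat.cast_one, ZMod.natCast_rightInverse x]
      have hyx : y = x + 1 := by
        rw [← ZMod.natCast_rightInverse y, h, hcv]
      exact not_adjacent hL hx (hyx ▸ hy)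
    · exfalso
      have hcv : ((y.val + 1 : ℕ) : ZMod (n + 1)) = y + 1 := by
        rw [Nat.cast_add, Nat.cast_one, ZMod.natCast_rightInverse y]
      have hxy' : x = y + 1 := by
        rw [← ZMod.natCast_rightInverse x, h, hcv]
      exact not_adjacent hL hy (hxy' ▸ hx)

end Upper

section Witness

/-- The Kupisch series `[2,3,2,3,...,2,(3|2),2,1]` attaining the 2-regular bound. -/
def wK (n : ℕ) : ZMod (n + 1) → ℕ := fun x =>
  if x.val = n then 1 else if x.val % 2 = 1 ∧ x.val + 2 ≤ n then 3 else 2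

variable {n : ℕ}

lemma wK_cast {j : ℕ} (hj : j ≤ n) :
    wK n (j : ZMod (n + 1)) = if j = n then 1 else if j % 2 = 1 ∧ j + 2 ≤ n then 3 else 2 := by
  rw [wK, ZMod.val_cast_of_lt (by omega)]

lemma wK_le_three (x : ZMod (n + 1)) : wK n x ≤ 3 := by
  rw [wK]; split_ifs <;> omega

lemma wK_pos (x : ZMod (n + 1)) : 1 ≤ wK n x := by
  rw [wK]; split_ifs <;> omega

lemma val_add_one (x : ZMod (n + 1)) : (x + 1).val = if x.val = n then 0 else x.val + 1 := by
  have hx : ((x.val : ℕ) : ZMod (n + 1)) = x := ZMod.natCast_rightInverse x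
  have hx1 : x + 1 = ((x.val + 1 : ℕ) : ZMod (n + 1)) := by
    rw [Nat.cast_add, Nat.cast_one, hx]
  split_ifs with h
  · rw [hx1, h, ZMod.natCast_self, ZMod.val_zero]
  · have hlt := ZMod.val_lt x
    rw [hx1, ZMod.val_cast_of_lt (by omega)]

lemma wK_isL : IsLKupisch n (wK n) := by
  refine ⟨wK_pos, ?_, ?_, ?_⟩
  · intro x
    have h1 : (x + 1).val = if x.val = n then 0 else x.val + 1 := val_add_one x
    have hlt := ZMod.val_lt x
    rw [wK, wK, h1]
    rcases eq_or_ne x.val n with h | h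
    · simp only [h, if_pos rfl]; split_ifs <;> omega
    · rw [if_neg h]
      split_ifs with h2 h3 h4 <;> omega
  · rw [wK_cast le_rfl, if_pos rfl]
  · intro x hx
    have hv : x.val ≠ n := by
      intro h
      apply hx
      rw [← ZMod.natCast_rightInverse x, h]
    rw [wK]
    split_ifs <;> omega

lemma wK_coK_zero (hn : 1 ≤ n) : coK (wK n) ((0 : ℕ) : ZMod (n + 1)) = 1 := by
  refine coK_eq (by rw [wK_cast le_rfl, if_pos rfl]) le_rfl ?_ (by omega)
  have he : ((0 : ℕ) : ZMod (n + 1)) - ((1 : ℕ) : ZMod (n + 1)) = ((n : ℕ) : ZMod (n + 1)) := by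
    have : ((n + 1 : ℕ) : ZMod (n + 1)) = 0 := ZMod.natCast_self _
    push_cast at this ⊢
    linear_combination -this
  rw [he, wK_cast le_rfl, if_pos rfl]

lemma wK_coK_one (hn : 1 ≤ n) : coK (wK n) ((1 : ℕ) : ZMod (n + 1)) = 2 := by
  refine coK_eq (by rw [wK_cast le_rfl, if_pos rfl]) (by omega) ?_ ?_
  · have he : ((1 : ℕ) : ZMod (n + 1)) - ((2 : ℕ) : ZMod (n + 1)) = ((n : ℕ) : ZMod (n + 1)) := by
      have : ((n + 1 : ℕ) : ZMod (n + 1)) = 0 := ZMod.natCast_self _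
      push_cast at this ⊢
      linear_combination -this
    rw [he, wK_cast le_rfl, if_pos rfl]
    omega
  · intro j hj1 hj2
    have hj : j = 1 := by omega
    subst hj
    have he : ((1 : ℕ) : ZMod (n + 1)) - ((1 : ℕ) : ZMod (n + 1)) = ((0 : ℕ) : ZMod (n + 1)) := by
      push_cast; ring
    rw [he, wK_cast (by omega)]
    split_ifs <;> omega

lemma wK_coK_even {s : ℕ} (h2 : 2 ≤ s) (hs : s ≤ n) (hp : s % 2 = 0) :
    coK (wK n) (s : ZMod (n + 1)) = 2 := by
  refine coK_eq (by rw [wK_cast le_rfl, if_pos rfl]) (by omega) ?_ ?_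
  · rw [← cast_sub_cast s 2 h2, wK_cast (by omega)]
    split_ifs <;> omega
  · intro j hj1 hj2
    have hj : j = 1 := by omega
    subst hj
    rw [← cast_sub_cast s 1 (by omega), wK_cast (by omega)]
    split_ifs <;> omega

lemma wK_coK_odd {s : ℕ} (h3 : 3 ≤ s) (hs : s ≤ n) (hp : s % 2 = 1) :
    coK (wK n) (s : ZMod (n + 1)) = 3 := by
  refine coK_eq (by rw [wK_cast le_rfl, if_pos rfl]) (by omega) ?_ ?_
  · rw [← cast_sub_cast s 3 h3]
    exact wK_le_three _
  · intro j hj1 hj2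
    interval_cases j
    · rw [← cast_sub_cast s 1 (by omega), wK_cast (by omega)]
      split_ifs <;> omega
    · rw [← cast_sub_cast s 2 (by omega), wK_cast (by omega)]
      split_ifs <;> omega

lemma cosyz_zero_inv {c : ZMod (n + 1) → ℕ} {s s' : ZMod (n + 1)} {k k' : ℕ}
    (h : CoSyz c s k 0 s' k') : s' = s ∧ k' = k := by
  cases h; exact ⟨rfl, rfl⟩

lemma cosyz_succ_inv {c : ZMod (n + 1) → ℕ} {s s' : ZMod (n + 1)} {k k' l : ℕ}
    (h : CoSyz c s k (l + 1) s' k') :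
    ∃ s1 k1, CoSyz c s k l s1 k1 ∧ k1 < coK c s1 ∧ s' = s1 - (k1 : ZMod (n + 1)) ∧
      k' = coK c s1 - k1 := by
  cases h with
  | step _ _ _ hh hh' => exact ⟨_, _, hh, hh', rfl, rfl⟩

end Witness

section Witness2
variable {n : ℕ}

lemma wK_start {j : ℕ} (hj : j ≤ n) {w : ℕ} (hw : wK n ((j : ℕ) : ZMod (n + 1)) = w) :
    ((j : ℕ) : ZMod (n + 1)) + ((wK n ((j : ℕ) : ZMod (n + 1)) : ℕ) : ZMod (n + 1)) - 1
      = ((j + w - 1 : ℕ) : ZMod (n + 1)) := by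
  have h1 := wK_pos (n := n) ((j : ℕ) : ZMod (n + 1))
  rw [hw, cast_sub_cast (j + w) 1 (by omega)]
  push_cast; ring

lemma exists_cast (r : ZMod (n + 1)) : ∃ j, j ≤ n ∧ r = ((j : ℕ) : ZMod (n + 1)) :=
  ⟨r.val, Nat.lt_succ_iff.mp (ZMod.val_lt r), (ZMod.natCast_rightInverse r).symm⟩

/-- Where the injective coresolution of a projective starts, for the witness algebra. -/
lemma wK_level0 {r s : ZMod (n + 1)} {m : ℕ}
    (h : CoSyz (wK n) (r + ((wK n r : ℕ) : ZMod (n + 1)) - 1) (wK n r) 0 s m) :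
    ∃ j', s = ((j' : ℕ) : ZMod (n + 1)) ∧ j' ≤ n ∧ (j' % 2 = 1 ∨ j' = n) := by
  obtain ⟨j, hj, hr⟩ := exists_cast r
  subst hr
  obtain ⟨hs, -⟩ := cosyz_zero_inv h
  rcases eq_or_ne j n with hjn | hjn
  · have hw : wK n ((j : ℕ) : ZMod (n + 1)) = 1 := by
      rw [wK_cast hj, if_pos hjn]
    rw [wK_start hj hw] at hs
    exact ⟨j + 1 - 1, hs, by omega, by omega⟩
  · rcases Nat.mod_two_eq_zero_or_one j with hp | hp
    · have hw : wK n ((j : ℕ) : ZMod (n + 1)) = 2 := by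
        rw [wK_cast hj]; split_ifs <;> omega
      rw [wK_start hj hw] at hs
      exact ⟨j + 2 - 1, hs, by omega, by omega⟩
    · rcases le_or_gt (j + 2) n with h2 | h2
      · have hw : wK n ((j : ℕ) : ZMod (n + 1)) = 3 := by
          rw [wK_cast hj]; split_ifs <;> omega
        rw [wK_start hj hw] at hs
        exact ⟨j + 3 - 1, hs, by omega, by omega⟩
      · have hw : wK n ((j : ℕ) : ZMod (n + 1)) = 2 := by
          rw [wK_cast hj]; split_ifs <;> omega
        rw [wK_start hj hw] at hs
        exact ⟨j + 2 - 1, hs, by omega, by omega⟩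

/-- First cosyzygies of projectives for the witness algebra. -/
lemma wK_level1 (hn : 2 ≤ n) {r s : ZMod (n + 1)} {m : ℕ}
    (h : CoSyz (wK n) (r + ((wK n r : ℕ) : ZMod (n + 1)) - 1) (wK n r) 1 s m) :
    ∃ j', s = ((j' : ℕ) : ZMod (n + 1)) ∧ j' ≤ n ∧ (j' % 2 = 1 ∨ j' = n - 1) := by
  obtain ⟨j, hj, hr⟩ := exists_cast r
  subst hr
  obtain ⟨s0, k0, h0, hlt0, hs1, hk1⟩ := cosyz_succ_inv h
  obtain ⟨e0, e1⟩ := cosyz_zero_inv h0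
  subst e0; subst e1
  rcases eq_or_ne j n with hjn | hjn
  · have hw : wK n ((j : ℕ) : ZMod (n + 1)) = 1 := by
      rw [wK_cast hj, if_pos hjn]
    rw [wK_start hj hw, hw] at hs1
    rw [hs1, ← cast_sub_cast (j + 1 - 1) 1 (by omega)]
    exact ⟨j + 1 - 1 - 1, rfl, by omega, by omega⟩
  · rcases Nat.mod_two_eq_zero_or_one j with hp | hp
    · have hw : wK n ((j : ℕ) : ZMod (n + 1)) = 2 := by
        rw [wK_cast hj]; split_ifs <;> omega
      rw [wK_start hj hw, hw] at hs1 hlt0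
      rcases eq_or_ne j 0 with h0' | h0'
      · exfalso
        subst h0'
        rw [show (0 + 2 - 1 : ℕ) = 1 from rfl, wK_coK_one (by omega)] at hlt0
        omega
      · rw [hs1, ← cast_sub_cast (j + 2 - 1) 2 (by omega)]
        exact ⟨j + 2 - 1 - 2, rfl, by omega, by omega⟩
    · exfalso
      rcases le_or_gt (j + 2) n with h2 | h2
      · have hw : wK n ((j : ℕ) : ZMod (n + 1)) = 3 := by
          rw [wK_cast hj]; split_ifs <;> omega
        rw [wK_start hj hw, hw] at hlt0
        rw [wK_coK_odd (by omega) (by omega) (by omega)] at hlt0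
        omega
      · have hw : wK n ((j : ℕ) : ZMod (n + 1)) = 2 := by
          rw [wK_cast hj]; split_ifs <;> omega
        rw [wK_start hj hw, hw] at hlt0
        rw [show (j + 2 - 1 : ℕ) = n by omega, wK_coK_even hn le_rfl (by omega)] at hlt0
        omega

/-- Second cosyzygies of projectives for the witness algebra. -/
lemma wK_level2 (hn : 2 ≤ n) {r s : ZMod (n + 1)} {m : ℕ}
    (h : CoSyz (wK n) (r + ((wK n r : ℕ) : ZMod (n + 1)) - 1) (wK n r) 2 s m) :
    2 ≤ r.val ∧ r.val ≤ n ∧ r.val % 2 = 0 ∧ s = ((r.val - 2 : ℕ) : ZMod (n + 1)) := by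
  obtain ⟨j, hj, hr⟩ := exists_cast r
  have hrv : r.val = j := by rw [hr, ZMod.val_cast_of_lt (by omega)]
  subst hr
  rw [hrv]
  obtain ⟨s1, k1, h1, hlt1, hs, -⟩ := cosyz_succ_inv h
  obtain ⟨s0, k0, h0, hlt0, hs1, hk1⟩ := cosyz_succ_inv h1
  obtain ⟨e0, e1⟩ := cosyz_zero_inv h0
  subst e0; subst e1
  rcases eq_or_ne j n with hjn | hjn
  · have hw : wK n ((j : ℕ) : ZMod (n + 1)) = 1 := by
      rw [wK_cast hj, if_pos hjn]
    rw [wK_start hj hw, hw] at hs1 hk1 hlt0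
    rcases Nat.mod_two_eq_zero_or_one n with hp | hp
    · have hcoK : coK (wK n) ((j + 1 - 1 : ℕ) : ZMod (n + 1)) = 2 := by
        rw [show (j + 1 - 1 : ℕ) = n by omega]; exact wK_coK_even hn le_rfl hp
      rw [hcoK] at hk1
      rw [← cast_sub_cast (j + 1 - 1) 1 (by omega)] at hs1
      rw [hs1, hk1] at hs
      rw [show (2 - 1 : ℕ) = 1 from rfl, ← cast_sub_cast (j + 1 - 1 - 1) 1 (by omega)] at hs
      refine ⟨by omega, by omega, by omega, ?_⟩
      rw [hs]
      exact congrArg Nat.cast (by omega)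
    · exfalso
      have hcoK : coK (wK n) ((j + 1 - 1 : ℕ) : ZMod (n + 1)) = 3 := by
        rw [show (j + 1 - 1 : ℕ) = n by omega]; exact wK_coK_odd (by omega) le_rfl hp
      rw [hcoK] at hk1
      rw [← cast_sub_cast (j + 1 - 1) 1 (by omega)] at hs1
      rw [hs1, hk1] at hlt1
      rw [show (j + 1 - 1 - 1 : ℕ) = n - 1 by omega,
        wK_coK_even (by omega) (by omega) (by omega)] at hlt1
      omega
  · rcases Nat.mod_two_eq_zero_or_one j with hp | hp
    · have hw : wK n ((j : ℕ) : ZMod (n + 1)) = 2 := by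
        rw [wK_cast hj]; split_ifs <;> omega
      rw [wK_start hj hw, hw] at hs1 hk1 hlt0
      rcases eq_or_ne j 0 with h0' | h0'
      · exfalso
        subst h0'
        rw [show (0 + 2 - 1 : ℕ) = 1 from rfl, wK_coK_one (by omega)] at hlt0
        omega
      · have hj2 : 2 ≤ j := by omega
        have hcoK : coK (wK n) ((j + 2 - 1 : ℕ) : ZMod (n + 1)) = 3 :=
          wK_coK_odd (by omega) (by omega) (by omega)
        rw [hcoK] at hk1
        rw [← cast_sub_cast (j + 2 - 1) 2 (by omega)] at hs1
        rw [hs1, hk1] at hs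
        rw [show (3 - 2 : ℕ) = 1 from rfl, ← cast_sub_cast (j + 2 - 1 - 2) 1 (by omega)] at hs
        refine ⟨hj2, by omega, hp, ?_⟩
        rw [hs]
        exact congrArg Nat.cast (by omega)
    · exfalso
      rcases le_or_gt (j + 2) n with h2 | h2
      · have hw : wK n ((j : ℕ) : ZMod (n + 1)) = 3 := by
          rw [wK_cast hj]; split_ifs <;> omega
        rw [wK_start hj hw, hw] at hlt0
        rw [wK_coK_odd (by omega) (by omega) (by omega)] at hlt0
        omega
      · have hw : wK n ((j : ℕ) : ZMod (n + 1)) = 2 := by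
          rw [wK_cast hj]; split_ifs <;> omega
        rw [wK_start hj hw, hw] at hlt0
        rw [show (j + 2 - 1 : ℕ) = n by omega, wK_coK_even hn le_rfl (by omega)] at hlt0
        omega

end Witness2

section Witness3
variable {n : ℕ}

lemma wK_chain_ex {k : ℕ} (hk : 2 * k + 2 ≤ n) :
    ∃ m, CoSyz (wK n)
      (((2 * k + 2 : ℕ) : ZMod (n + 1)) +
        ((wK n ((2 * k + 2 : ℕ) : ZMod (n + 1)) : ℕ) : ZMod (n + 1)) - 1)
      (wK n ((2 * k + 2 : ℕ) : ZMod (n + 1))) 2 ((2 * k : ℕ) : ZMod (n + 1)) m := by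
  set j := 2 * k + 2 with hj
  have hjn : j ≤ n := hk
  have hn : 2 ≤ n := by omega
  rcases eq_or_ne j n with hje | hje
  · -- j = n, n even
    have hw : wK n ((j : ℕ) : ZMod (n + 1)) = 1 := by rw [wK_cast hjn, if_pos hje]
    rw [wK_start hjn hw, hw]
    have c0 : CoSyz (wK n) ((j + 1 - 1 : ℕ) : ZMod (n + 1)) 1 0
        ((j + 1 - 1 : ℕ) : ZMod (n + 1)) 1 := CoSyz.zero _ _
    have hcoK1 : coK (wK n) ((j + 1 - 1 : ℕ) : ZMod (n + 1)) = 2 :=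
      wK_coK_even (by omega) (by omega) (by omega)
    have c1 := CoSyz.step _ _ _ _ _ c0 (by rw [hcoK1]; omega)
    rw [hcoK1, ← cast_sub_cast (j + 1 - 1) 1 (by omega)] at c1
    have hlt2 : 2 - 1 < coK (wK n) ((j + 1 - 1 - 1 : ℕ) : ZMod (n + 1)) := by
      rcases Nat.eq_zero_or_pos k with hk0 | hk0
      · rw [show (j + 1 - 1 - 1 : ℕ) = 1 by omega, wK_coK_one (by omega)]; omega
      · rw [wK_coK_odd (by omega) (by omega) (by omega)]; omega
    have c2 := CoSyz.step _ _ _ _ _ c1 hlt2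
    rw [show (2 - 1 : ℕ) = 1 from rfl, ← cast_sub_cast (j + 1 - 1 - 1) 1 (by omega)] at c2
    rw [show ((2 * k : ℕ) : ZMod (n + 1)) = ((j + 1 - 1 - 1 - 1 : ℕ) : ZMod (n + 1)) from
      congrArg Nat.cast (by omega)]
    exact ⟨_, c2⟩
  · -- j < n
    have hw : wK n ((j : ℕ) : ZMod (n + 1)) = 2 := by
      rw [wK_cast hjn]; split_ifs <;> omega
    rw [wK_start hjn hw, hw]
    have c0 : CoSyz (wK n) ((j + 2 - 1 : ℕ) : ZMod (n + 1)) 2 0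
        ((j + 2 - 1 : ℕ) : ZMod (n + 1)) 2 := CoSyz.zero _ _
    have hcoK1 : coK (wK n) ((j + 2 - 1 : ℕ) : ZMod (n + 1)) = 3 :=
      wK_coK_odd (by omega) (by omega) (by omega)
    have c1 := CoSyz.step _ _ _ _ _ c0 (by rw [hcoK1]; omega)
    rw [hcoK1, ← cast_sub_cast (j + 2 - 1) 2 (by omega)] at c1
    have hlt2 : 3 - 2 < coK (wK n) ((j + 2 - 1 - 2 : ℕ) : ZMod (n + 1)) := by
      rcases Nat.eq_zero_or_pos k with hk0 | hk0
      · rw [show (j + 2 - 1 - 2 : ℕ) = 1 by omega, wK_coK_one (by omega)]; omega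
      · rw [wK_coK_odd (by omega) (by omega) (by omega)]; omega
    have c2 := CoSyz.step _ _ _ _ _ c1 hlt2
    rw [show (3 - 2 : ℕ) = 1 from rfl, ← cast_sub_cast (j + 2 - 1 - 2) 1 (by omega)] at c2
    rw [show ((2 * k : ℕ) : ZMod (n + 1)) = ((j + 2 - 1 - 2 - 1 : ℕ) : ZMod (n + 1)) from
      congrArg Nat.cast (by omega)]
    exact ⟨_, c2⟩

lemma wK_pd {k : ℕ} (hk : 2 * k + 2 ≤ n) :
    PdIs (wK n) ((2 * k : ℕ) : ZMod (n + 1)) 1 2 := by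
  have hw0 : wK n ((2 * k : ℕ) : ZMod (n + 1)) = 2 := by
    rw [wK_cast (by omega)]; split_ifs <;> omega
  have e1 : ((2 * k : ℕ) : ZMod (n + 1)) + ((1 : ℕ) : ZMod (n + 1))
      = ((2 * k + 1 : ℕ) : ZMod (n + 1)) := by push_cast; ring
  have e2 : ((2 * k + 1 : ℕ) : ZMod (n + 1)) + ((1 : ℕ) : ZMod (n + 1))
      = ((2 * k + 2 : ℕ) : ZMod (n + 1)) := by push_cast; ring
  have h' : PdIs (wK n) ((2 * k + 1 : ℕ) : ZMod (n + 1)) 1 1 := by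
    rcases eq_or_ne (2 * k + 2) n with hje | hje
    · -- next is the sink
      have hw1 : wK n ((2 * k + 1 : ℕ) : ZMod (n + 1)) = 2 := by
        rw [wK_cast (by omega)]; split_ifs <;> omega
      have hw2 : wK n ((2 * k + 2 : ℕ) : ZMod (n + 1)) = 1 := by
        rw [wK_cast (by omega), if_pos hje]
      have hproj : PdIs (wK n) ((2 * k + 2 : ℕ) : ZMod (n + 1)) 1 0 :=
        PdIs.proj _ _ hw2.symm
      have htgt : PdIs (wK n) (((2 * k + 1 : ℕ) : ZMod (n + 1)) + ((1 : ℕ) : ZMod (n + 1)))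
          (wK n ((2 * k + 1 : ℕ) : ZMod (n + 1)) - 1) 0 := by
        rw [e2, hw1]; exact hproj
      rw [Nat.cast_one] at htgt
      exact PdIs.step _ 1 0 (by rw [hw1]; omega) htgt
    · have hw1 : wK n ((2 * k + 1 : ℕ) : ZMod (n + 1)) = 3 := by
        rw [wK_cast (by omega)]; split_ifs <;> omega
      have hw2 : wK n ((2 * k + 2 : ℕ) : ZMod (n + 1)) = 2 := by
        rw [wK_cast (by omega)]; split_ifs <;> omega
      have hproj : PdIs (wK n) ((2 * k + 2 : ℕ) : ZMod (n + 1)) 2 0 :=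
        PdIs.proj _ _ hw2.symm
      have htgt : PdIs (wK n) (((2 * k + 1 : ℕ) : ZMod (n + 1)) + ((1 : ℕ) : ZMod (n + 1)))
          (wK n ((2 * k + 1 : ℕ) : ZMod (n + 1)) - 1) 0 := by
        rw [e2, hw1]; exact hproj
      rw [Nat.cast_one] at htgt
      exact PdIs.step _ 1 0 (by rw [hw1]; omega) htgt
  have htgt : PdIs (wK n) (((2 * k : ℕ) : ZMod (n + 1)) + ((1 : ℕ) : ZMod (n + 1)))
      (wK n ((2 * k : ℕ) : ZMod (n + 1)) - 1) 1 := by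
    rw [e1, hw0]; exact h'
  rw [Nat.cast_one] at htgt
  exact PdIs.step _ 1 1 (by rw [hw0]; omega) htgt

lemma wK_reg {k : ℕ} (hk : 2 * k + 2 ≤ n) :
    IsRegular (wK n) 2 ((2 * k : ℕ) : ZMod (n + 1)) := by
  have hn : 2 ≤ n := by omega
  refine ⟨wK_pd hk, ?_, ?_⟩
  · intro l hl
    interval_cases l
    · haveI : IsEmpty {r : ZMod (n + 1) // ∃ m,
          CoSyz (wK n) (r + ((wK n r : ℕ) : ZMod (n + 1)) - 1) (wK n r) 0
            ((2 * k : ℕ) : ZMod (n + 1)) m} := by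
        refine ⟨fun x => ?_⟩
        obtain ⟨r, m, hc⟩ := x
        obtain ⟨j', hs, hj', hpar⟩ := wK_level0 hc
        have := congrArg ZMod.val hs
        rw [ZMod.val_cast_of_lt (by omega), ZMod.val_cast_of_lt (by omega)] at this
        omega
      exact Nat.card_of_isEmpty
    · haveI : IsEmpty {r : ZMod (n + 1) // ∃ m,
          CoSyz (wK n) (r + ((wK n r : ℕ) : ZMod (n + 1)) - 1) (wK n r) 1
            ((2 * k : ℕ) : ZMod (n + 1)) m} := by
        refine ⟨fun x => ?_⟩
        obtain ⟨r, m, hc⟩ := x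
        obtain ⟨j', hs, hj', hpar⟩ := wK_level1 hn hc
        have := congrArg ZMod.val hs
        rw [ZMod.val_cast_of_lt (by omega), ZMod.val_cast_of_lt (by omega)] at this
        omega
      exact Nat.card_of_isEmpty
  · apply Nat.card_eq_one_iff_unique.mpr
    constructor
    · constructor
      rintro ⟨r1, hr1⟩ ⟨r2, hr2⟩
      obtain ⟨m1, hc1⟩ := hr1
      obtain ⟨m2, hc2⟩ := hr2
      obtain ⟨h21, h22, h23, h24⟩ := wK_level2 hn hc1
      obtain ⟨h31, h32, h33, h34⟩ := wK_level2 hn hc2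
      have e1 := congrArg ZMod.val h24
      have e2 := congrArg ZMod.val h34
      rw [ZMod.val_cast_of_lt (by omega), ZMod.val_cast_of_lt (by omega)] at e1
      rw [ZMod.val_cast_of_lt (by omega), ZMod.val_cast_of_lt (by omega)] at e2
      have : r1.val = r2.val := by omega
      exact Subtype.ext (ZMod.val_injective _ this)
    · exact ⟨⟨((2 * k + 2 : ℕ) : ZMod (n + 1)), wK_chain_ex hk⟩⟩

lemma wK_card : Nat.card {i : ZMod (n + 1) // IsRegular (wK n) 2 i} = n / 2 := by
  refine le_antisymm (count_le wK_isL) ?_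
  have hinj : Function.Injective (fun t : Fin (n / 2) =>
      (⟨((2 * t.val : ℕ) : ZMod (n + 1)), wK_reg (by omega)⟩ :
        {i : ZMod (n + 1) // IsRegular (wK n) 2 i})) := by
    intro a b h
    have := congrArg (fun x : {i : ZMod (n + 1) // IsRegular (wK n) 2 i} => x.1.val) h
    simp only at this
    rw [ZMod.val_cast_of_lt (by omega), ZMod.val_cast_of_lt (by omega)] at this
    exact Fin.ext (by omega)
  have := Nat.card_le_card_of_injective _ hinj
  simpa using this

end Witness3

section Dyck

/-- The two-hill predicate. -/
def Hill (p : List Bool) (i : ℕ) : Prop :=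
  balancedAt p i ∧ p[i]? = some true ∧ p[i + 1]? = some true ∧
    p[i + 2]? = some false ∧ p[i + 3]? = some false

lemma hill_spacing {p : List Bool} {i i' : ℕ} (h : Hill p i) (h' : Hill p i')
    (hlt : i < i') : i + 4 ≤ i' := by
  by_contra hc
  have hcase : i' = i + 1 ∨ i' = i + 2 ∨ i' = i + 3 := by omega
  rcases hcase with hc' | hc' | hc' <;> subst hc'
  · have h1 := h'.2.2.1
    rw [show i + 1 + 1 = i + 2 by omega, h.2.2.2.1] at h1
    simp at h1
  · have h1 := h'.2.1
    rw [h.2.2.2.1] at h1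
    simp at h1
  · have h1 := h'.2.1
    rw [h.2.2.2.2] at h1
    simp at h1

lemma dyck_bound {n : ℕ} {p : List Bool} (h : IsDyck n p) : numTwoHills p ≤ n / 2 := by
  obtain ⟨hlen, hct, hpre⟩ := h
  unfold numTwoHills
  have hbd : ∀ i : ℕ, Hill p i → i + 4 ≤ 2 * n := by
    intro i hi
    have := (List.getElem?_eq_some_iff.mp hi.2.2.2.2).1
    omega
  refine le_trans (Nat.card_le_card_of_injective
    (fun x : {i : ℕ // balancedAt p i ∧ p[i]? = some true ∧ p[i + 1]? = some true ∧
        p[i + 2]? = some false ∧ p[i + 3]? = some false} =>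
      (⟨x.1 / 4, by have := hbd x.1 x.2; omega⟩ : Fin (n / 2))) ?_) (by simp)
  rintro ⟨x, hx⟩ ⟨y, hy⟩ hxy
  simp only [Fin.mk.injEq] at hxy
  rcases lt_trichotomy x y with hl | he | hl
  · have := hill_spacing hx hy hl
    omega
  · exact Subtype.ext he
  · have := hill_spacing hy hx hl
    omega

/-- The Dyck path `(RRUU)^(n/2) (RU)^(n%2)`, built back-to-front. -/
def dW : ℕ → List Bool
  | 0 => []
  | 1 => [true, false]
  | n + 2 => [true, true, false, false] ++ dW n

lemma dW_isDyck : ∀ n, IsDyck n (dW n) := by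
  intro n
  induction n using Nat.twoStepInduction with
  | zero =>
    refine ⟨rfl, rfl, ?_⟩
    intro i hi
    interval_cases i
    simp [dW]
  | one =>
    refine ⟨rfl, rfl, ?_⟩
    intro i hi
    interval_cases i <;> decide
  | more m ih _ =>
    obtain ⟨hlen, hct, hpre⟩ := ih
    refine ⟨?_, ?_, ?_⟩
    · show ([true, true, false, false] ++ dW m).length = 2 * (m + 2)
      rw [List.length_append, hlen]
      simp only [List.length_cons, List.length_nil]
      omega
    · show ([true, true, false, false] ++ dW m).count true = m + 2
      rw [List.count_append, hct]
      have e2 : ([true, true, false, false] : List Bool).count true = 2 := by decide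
      omega
    · intro i hi
      show (List.take i ([true, true, false, false] ++ dW m)).count false ≤
        (List.take i ([true, true, false, false] ++ dW m)).count true
      rw [List.take_append, List.count_append, List.count_append,
        show ([true, true, false, false] : List Bool).length = 4 from rfl]
      rcases le_or_gt i 4 with h4 | h4
      · rw [show i - 4 = 0 by omega]
        simp only [List.take_zero, List.count_nil, add_zero]
        interval_cases i <;> decide
      · rw [List.take_of_length_le (by
          simp only [List.length_cons, List.length_nil]; omega)]
        have := hpre (i - 4) (by omega)
        have e1 : ([true, true, false, false] : List Bool).count false = 2 := by decide
        have e2 : ([true, true, false, false] : List Bool).count true = 2 := by decide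
        rw [e1, e2]
        omega

lemma getElem?_shift (q : List Bool) (j : ℕ) :
    (([true, true, false, false] : List Bool) ++ q)[4 + j]? = q[j]? := by
  rw [List.getElem?_append_right (by simp)]
  congr 1
  simp

lemma balanced_shift (q : List Bool) (i : ℕ) :
    balancedAt ([true, true, false, false] ++ q) (4 + i) ↔ balancedAt q i := by
  unfold balancedAt
  rw [List.take_append, List.take_of_length_le (by simp),
    show 4 + i - ([true, true, false, false] : List Bool).length = i by simp,
    List.count_append, List.count_append]
  have e1 : ([true, true, false, false] : List Bool).count false = 2 := by decide
  have e2 : ([true, true, false, false] : List Bool).count true = 2 := by decide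
  rw [e1, e2]
  omega

lemma hill_shift (q : List Bool) (i : ℕ) :
    Hill ([true, true, false, false] ++ q) (4 + i) ↔ Hill q i := by
  unfold Hill
  rw [balanced_shift, show 4 + i + 1 = 4 + (i + 1) by omega,
    show 4 + i + 2 = 4 + (i + 2) by omega, show 4 + i + 3 = 4 + (i + 3) by omega,
    getElem?_shift, getElem?_shift, getElem?_shift, getElem?_shift]

lemma hill_dW : ∀ n i, Hill (dW n) i → i % 4 = 0 ∧ i + 4 ≤ 4 * (n / 2) := by
  intro n
  induction n using Nat.twoStepInduction with
  | zero =>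
    intro i hi
    have := hi.2.1
    simp [dW] at this
  | one =>
    intro i hi
    have := (List.getElem?_eq_some_iff.mp hi.2.2.2.2).1
    exact absurd this (by simp [dW])
  | more m ih _ =>
    intro i hi
    have hdw : dW (m + 2) = [true, true, false, false] ++ dW m := rfl
    rw [hdw] at hi
    rcases Nat.lt_or_ge i 4 with h4 | h4
    · interval_cases i
      · constructor
        · rfl
        · omega
      · exfalso
        have h1 := hi.1
        unfold balancedAt at h1
        rw [List.take_append,
          show ([true, true, false, false] : List Bool).length = 4 from rfl,
          show 1 - 4 = 0 by omega] at h1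
        simp at h1
      · exfalso
        have h1 := hi.2.1
        rw [show (([true, true, false, false] : List Bool) ++ dW m)[2]? = some false
          by simp] at h1
        simp at h1
      · exfalso
        have h1 := hi.2.1
        rw [show (([true, true, false, false] : List Bool) ++ dW m)[3]? = some false
          by simp] at h1
        simp at h1
    · obtain ⟨j, rfl⟩ : ∃ j, i = 4 + j := ⟨i - 4, by omega⟩
      have := ih j ((hill_shift (dW m) j).mp hi)
      omega

lemma dW_hill : ∀ n k, k < n / 2 → Hill (dW n) (4 * k) := by
  intro n
  induction n using Nat.twoStepInduction with
  | zero => intro k hk; omega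
  | one => intro k hk; omega
  | more m ih _ =>
    intro k hk
    have hdw : dW (m + 2) = [true, true, false, false] ++ dW m := rfl
    rw [hdw]
    rcases Nat.eq_zero_or_pos k with h0 | h0
    · subst h0
      exact ⟨rfl, rfl, rfl, by simp, by simp⟩
    · obtain ⟨k', rfl⟩ : ∃ k', k = k' + 1 := ⟨k - 1, by omega⟩
      rw [show 4 * (k' + 1) = 4 + 4 * k' by omega]
      exact (hill_shift (dW m) (4 * k')).mpr (ih k' (by omega))

lemma dW_count (n : ℕ) : numTwoHills (dW n) = n / 2 := by
  unfold numTwoHills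
  have hfin : Function.Injective (fun x : {i : ℕ // balancedAt (dW n) i ∧
      (dW n)[i]? = some true ∧ (dW n)[i + 1]? = some true ∧
      (dW n)[i + 2]? = some false ∧ (dW n)[i + 3]? = some false} =>
      (⟨x.1 / 4, by have := hill_dW n x.1 x.2; omega⟩ : Fin (n / 2))) := by
    intro a b hab
    simp only [Fin.mk.injEq] at hab
    have h1 := hill_dW n a.1 a.2
    have h2 := hill_dW n b.1 b.2
    exact Subtype.ext (by omega)
  haveI := Finite.of_injective _ hfin
  refine le_antisymm (by simpa using Nat.card_le_card_of_injective _ hfin) ?_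
  have hinj2 : Function.Injective (fun t : Fin (n / 2) =>
      (⟨4 * t.val, dW_hill n t.val t.2⟩ : {i : ℕ // balancedAt (dW n) i ∧
      (dW n)[i]? = some true ∧ (dW n)[i + 1]? = some true ∧
      (dW n)[i + 2]? = some false ∧ (dW n)[i + 3]? = some false})) := by
    intro a b hab
    simp only [Subtype.mk.injEq] at hab
    exact Fin.ext (by have := congrArg Subtype.val hab; simp only at this; omega)
  simpa using Nat.card_le_card_of_injective _ hinj2

end Dyck

/-- A Dyck path of semilength `n` has at most `⌊n/2⌋` 2-hills, and
this bound is attained.  Consequently an `(n+1)`-LNakayama algebra has at most `⌊n/2⌋`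
2-regular simple modules (bound attained), and hence (by Enomoto's bijection between
exact structures and sets of 2-regular simple modules) at most `2 ^ ⌊n/2⌋` exact
structures on its category of finitely generated projective modules. -/
theorem two_hill_bounds (n : ℕ) :
    (∀ p : List Bool, IsDyck n p → numTwoHills p ≤ n / 2) ∧
    (∃ p : List Bool, IsDyck n p ∧ numTwoHills p = n / 2) ∧
    (∀ c : ZMod (n + 1) → ℕ, IsLKupisch n c →
      Nat.card {i : ZMod (n + 1) // IsRegular c 2 i} ≤ n / 2) ∧
    (∃ c : ZMod (n + 1) → ℕ, IsLKupisch n c ∧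
      Nat.card {i : ZMod (n + 1) // IsRegular c 2 i} = n / 2) ∧
    (∀ c : ZMod (n + 1) → ℕ, IsLKupisch n c →
      Nat.card (Set {i : ZMod (n + 1) // IsRegular c 2 i}) ≤ 2 ^ (n / 2)) := by
  refine ⟨fun p hp => dyck_bound hp, ⟨dW n, dW_isDyck n, dW_count n⟩,
    fun c hc => count_le hc, ⟨wK n, wK_isL, wK_card⟩, ?_⟩
  intro c hc
  have h1 := count_le hc
  have hProp : Nat.card Prop = 2 := by simp [Nat.card_eq_fintype_card]
  have h2 : Nat.card (Set {i : ZMod (n + 1) // IsRegular c 2 i})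
      = 2 ^ Nat.card {i : ZMod (n + 1) // IsRegular c 2 i} := by
    rw [show (Set {i : ZMod (n + 1) // IsRegular c 2 i})
      = ({i : ZMod (n + 1) // IsRegular c 2 i} → Prop) from rfl, Nat.card_fun, hProp]
  rw [h2]
  exact Nat.pow_le_pow_right (by norm_num) h1

end Nak
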